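/- Let n ∈ ℕ and let a₀, a₁, …, aₙ be real numbers such that there exists k₀ ∈ {0,…,n} with aₖ ≤ 0 for all k ≤ k₀ and aₖ ≥ 0 for all k > k₀. If Σ_{k=0}^n aₖ δ^k > 0 for some δ ∈ (0,1], then Σ_{k=0}^n aₖ μ^k > 0 for all μ ∈ [δ,1]; in particular Σ_{k=0}^n aₖ > 0. -/
import Mathlib


open Set

/-- Single-crossing lemma for polynomials: if the coefficients
`a₀,…,aₙ` change sign at most once, from nonpositive (for `k ≤ k₀`) to nonnegative
(for `k₀ < k ≤ n`), and `Σ aₖ δ^k > 0` for some `δ ∈ (0,1]`, then `Σ aₖ μ^k > 0` for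
all `μ ∈ [δ,1]`; in particular `Σ aₖ > 0`. -/
theorem stmt15
    (n : ℕ) (a : ℕ → ℝ) (k₀ : ℕ) (hk₀ : k₀ ≤ n)
    (hneg : ∀ k ≤ k₀, a k ≤ 0)
    (hpos : ∀ k, k₀ < k → k ≤ n → 0 ≤ a k)
    (δ : ℝ) (hδ : δ ∈ Ioc (0:ℝ) 1)
    (h : 0 < ∑ k ∈ Finset.range (n + 1), a k * δ ^ k) :
    (∀ μ ∈ Icc δ 1, 0 < ∑ k ∈ Finset.range (n + 1), a k * μ ^ k) ∧
    0 < ∑ k ∈ Finset.range (n + 1), a k := by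
  obtain ⟨hδ0, hδ1⟩ := hδ
  have main : ∀ μ ∈ Icc δ 1, 0 < ∑ k ∈ Finset.range (n + 1), a k * μ ^ k := by
    intro μ hμ
    obtain ⟨hδμ, hμ1⟩ := hμ
    have hμ0 : 0 < μ := lt_of_lt_of_le hδ0 hδμ
    -- termwise: μ^{k₀} * (a k * δ^k) ≤ δ^{k₀} * (a k * μ^k)
    have term : ∀ k ∈ Finset.range (n + 1),
        μ ^ k₀ * (a k * δ ^ k) ≤ δ ^ k₀ * (a k * μ ^ k) := by
      intro k hk
      have hkn : k ≤ n := Nat.lt_succ_iff.mp (Finset.mem_range.mp hk)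
      rcases le_or_gt k k₀ with hle | hlt
      · -- a k ≤ 0, and δ^{k₀} μ^k ≤ μ^{k₀} δ^k
        have ha := hneg k hle
        have hpow : δ ^ k₀ * μ ^ k ≤ μ ^ k₀ * δ ^ k := by
          have h1 : δ ^ (k₀ - k) ≤ μ ^ (k₀ - k) :=
            pow_le_pow_left₀ hδ0.le hδμ _
          calc δ ^ k₀ * μ ^ k = δ ^ (k₀ - k) * (δ ^ k * μ ^ k) := by
                rw [← mul_assoc, ← pow_add, Nat.sub_add_cancel hle]
            _ ≤ μ ^ (k₀ - k) * (δ ^ k * μ ^ k) := by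
                apply mul_le_mul_of_nonneg_right h1
                positivity
            _ = μ ^ k₀ * δ ^ k := by
                rw [show δ ^ k * μ ^ k = μ ^ k * δ ^ k from mul_comm _ _,
                  ← mul_assoc, ← pow_add, Nat.sub_add_cancel hle]
        calc μ ^ k₀ * (a k * δ ^ k) = a k * (μ ^ k₀ * δ ^ k) := by ring
          _ ≤ a k * (δ ^ k₀ * μ ^ k) := by
              exact mul_le_mul_of_nonpos_left hpow ha
          _ = δ ^ k₀ * (a k * μ ^ k) := by ring
      · have ha := hpos k hlt hkn
        have hpow : μ ^ k₀ * δ ^ k ≤ δ ^ k₀ * μ ^ k := by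
          have h1 : δ ^ (k - k₀) ≤ μ ^ (k - k₀) :=
            pow_le_pow_left₀ hδ0.le hδμ _
          calc μ ^ k₀ * δ ^ k = δ ^ (k - k₀) * (μ ^ k₀ * δ ^ k₀) := by
                rw [show δ ^ k = δ ^ (k - k₀) * δ ^ k₀ by
                  rw [← pow_add, Nat.sub_add_cancel hlt.le]]
                ring
            _ ≤ μ ^ (k - k₀) * (μ ^ k₀ * δ ^ k₀) := by
                apply mul_le_mul_of_nonneg_right h1
                positivity
            _ = δ ^ k₀ * μ ^ k := by
                rw [show μ ^ k = μ ^ (k - k₀) * μ ^ k₀ by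
                  rw [← pow_add, Nat.sub_add_cancel hlt.le]]
                ring
        calc μ ^ k₀ * (a k * δ ^ k) = a k * (μ ^ k₀ * δ ^ k) := by ring
          _ ≤ a k * (δ ^ k₀ * μ ^ k) := mul_le_mul_of_nonneg_left hpow ha
          _ = δ ^ k₀ * (a k * μ ^ k) := by ring
    have hsum : μ ^ k₀ * ∑ k ∈ Finset.range (n + 1), a k * δ ^ k ≤
        δ ^ k₀ * ∑ k ∈ Finset.range (n + 1), a k * μ ^ k := by
      rw [Finset.mul_sum, Finset.mul_sum]
      exact Finset.sum_le_sum term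
    have h1 : 0 < μ ^ k₀ * ∑ k ∈ Finset.range (n + 1), a k * δ ^ k := by
      positivity
    have h2 : 0 < δ ^ k₀ * ∑ k ∈ Finset.range (n + 1), a k * μ ^ k :=
      lt_of_lt_of_le h1 hsum
    have hδk : 0 < δ ^ k₀ := by positivity
    nlinarith [h2, hδk]
  refine ⟨main, ?_⟩
  have := main 1 ⟨hδ1, le_refl 1⟩
  simpa using this
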